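/- Let S and U be real symmetric positive semidefinite n×n matrices with λmax(U) + λmax(S) > 0, let x ∈ ℝⁿ, and set ζ = λmin(S)/(λmax(U) + λmax(S))² and x⁺ = x − ζ(S + U)x. Then ‖x⁺‖² ≤ ( 1 − λmin(S)²/(λmax(U) + λmax(S))² )·‖x‖². -/

import Mathlib

open Matrix
open scoped Classical InnerProductSpace

/-- The largest eigenvalue of a (Hermitian) real matrix. -/
noncomputable def lamMax {n : ℕ} (A : Matrix (Fin n) (Fin n) ℝ) : ℝ :=
  if h : A.IsHermitian then ⨆ i, h.eigenvalues i else 0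

/-- The smallest eigenvalue of a (Hermitian) real matrix. -/
noncomputable def lamMin {n : ℕ} (A : Matrix (Fin n) (Fin n) ℝ) : ℝ :=
  if h : A.IsHermitian then ⨅ i, h.eigenvalues i else 0

lemma eigLin {n : ℕ} (A : Matrix (Fin n) (Fin n) ℝ) (hA : A.IsHermitian) (j : Fin n) :
    Matrix.toEuclideanLin A (hA.eigenvectorBasis j) = hA.eigenvalues j • hA.eigenvectorBasis j := by
  apply (WithLp.equiv 2 _).injective
  simp [toEuclideanLin_apply]
  exact hA.mulVec_eigenvectorBasis j

lemma reprLin {n : ℕ} (A : Matrix (Fin n) (Fin n) ℝ) (hA : A.IsHermitian)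
    (y : EuclideanSpace ℝ (Fin n)) (i : Fin n) :
    (hA.eigenvectorBasis).repr (Matrix.toEuclideanLin A y) i
      = hA.eigenvalues i * (hA.eigenvectorBasis).repr y i := by
  set b := hA.eigenvectorBasis with hb
  have h1 : Matrix.toEuclideanLin A y = ∑ j, (b.repr y j * hA.eigenvalues j) • b j := by
    conv_lhs => rw [← b.sum_repr y]
    rw [map_sum]
    refine Finset.sum_congr rfl fun j _ => ?_
    rw [_root_.map_smul, eigLin A hA j, smul_smul]
  have h2 : ∀ j : Fin n, b.repr ((b.repr y j * hA.eigenvalues j) • b j) i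
      = if j = i then b.repr y i * hA.eigenvalues i else 0 := by
    intro j
    rw [_root_.map_smul, b.repr_self j]
    rcases eq_or_ne j i with h | h
    · subst h; simp [EuclideanSpace.single_apply]
    · simp [h, EuclideanSpace.single_apply, (Ne.symm h)]
  rw [h1, map_sum]
  have h3 : (∑ j, b.repr ((b.repr y j * hA.eigenvalues j) • b j)) i
      = ∑ j, b.repr ((b.repr y j * hA.eigenvalues j) • b j) i := by
    rw [WithLp.ofLp_sum]; exact Finset.sum_apply i Finset.univ _
  rw [h3]
  simp only [h2]
  rw [Finset.sum_ite_eq' Finset.univ i]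
  simp [mul_comm]

lemma normsq_repr {n : ℕ} (b : OrthonormalBasis (Fin n) ℝ (EuclideanSpace ℝ (Fin n)))
    (y : EuclideanSpace ℝ (Fin n)) : ‖y‖ ^ 2 = ∑ i, (b.repr y i) ^ 2 := by
  rw [← b.repr.norm_map y, EuclideanSpace.norm_eq, Real.sq_sqrt (by positivity)]
  simp [sq_abs]

lemma inner_repr {n : ℕ} (b : OrthonormalBasis (Fin n) ℝ (EuclideanSpace ℝ (Fin n)))
    (y z : EuclideanSpace ℝ (Fin n)) :
    ⟪y, z⟫_ℝ = ∑ i, (b.repr y i) * (b.repr z i) := by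
  rw [← b.repr.inner_map_map y z, PiLp.inner_apply]
  simp [RCLike.inner_apply]
  exact Finset.sum_congr rfl fun i _ => mul_comm _ _

lemma inner_toEuclideanLin {n : ℕ} (A : Matrix (Fin n) (Fin n) ℝ) (hA : A.IsHermitian)
    (y : EuclideanSpace ℝ (Fin n)) :
    ⟪y, Matrix.toEuclideanLin A y⟫_ℝ
      = ∑ i, hA.eigenvalues i * (hA.eigenvectorBasis.repr y i) ^ 2 := by
  rw [inner_repr hA.eigenvectorBasis]
  refine Finset.sum_congr rfl fun i _ => ?_
  rw [reprLin A hA y i]; ring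

lemma rayleigh_le {n : ℕ} (A : Matrix (Fin n) (Fin n) ℝ) (hA : A.IsHermitian)
    (y : EuclideanSpace ℝ (Fin n)) :
    ⟪y, Matrix.toEuclideanLin A y⟫_ℝ ≤ lamMax A * ‖y‖ ^ 2 := by
  rw [inner_toEuclideanLin A hA, normsq_repr hA.eigenvectorBasis, Finset.mul_sum]
  refine Finset.sum_le_sum fun i _ => ?_
  have h1 : hA.eigenvalues i ≤ lamMax A := by
    rw [lamMax, dif_pos hA]
    exact le_ciSup (Set.Finite.bddAbove (Set.finite_range _)) i
  exact mul_le_mul_of_nonneg_right h1 (sq_nonneg _)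

lemma rayleigh_ge {n : ℕ} (A : Matrix (Fin n) (Fin n) ℝ) (hA : A.IsHermitian)
    (y : EuclideanSpace ℝ (Fin n)) :
    lamMin A * ‖y‖ ^ 2 ≤ ⟪y, Matrix.toEuclideanLin A y⟫_ℝ := by
  rw [inner_toEuclideanLin A hA, normsq_repr hA.eigenvectorBasis, Finset.mul_sum]
  refine Finset.sum_le_sum fun i _ => ?_
  have h1 : lamMin A ≤ hA.eigenvalues i := by
    rw [lamMin, dif_pos hA]
    exact ciInf_le (Set.Finite.bddBelow (Set.finite_range _)) i
  exact mul_le_mul_of_nonneg_right h1 (sq_nonneg _)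

lemma lamMin_nonneg {n : ℕ} (A : Matrix (Fin n) (Fin n) ℝ) (hA : A.PosSemidef) :
    0 ≤ lamMin A := by
  rw [lamMin, dif_pos hA.1]
  exact Real.iInf_nonneg fun i => hA.eigenvalues_nonneg i

/-- One-step contraction of the estimation error for the specific adaptation gain
`ζ = λmin(S)/(λmax(U) + λmax(S))²`: with `x⁺ = x − ζ(S + U)x`,
`‖x⁺‖² ≤ (1 − λmin(S)²/(λmax(U) + λmax(S))²)·‖x‖²`. -/
theorem one_step_contraction (n : ℕ) (S U : Matrix (Fin n) (Fin n) ℝ)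
    (hS : S.PosSemidef) (hU : U.PosSemidef)
    (hpos : 0 < lamMax U + lamMax S)
    (x : EuclideanSpace ℝ (Fin n)) :
    ‖x - (lamMin S / (lamMax U + lamMax S) ^ 2) • (Matrix.toEuclideanLin (S + U) x)‖ ^ 2
      ≤ (1 - lamMin S ^ 2 / (lamMax U + lamMax S) ^ 2) * ‖x‖ ^ 2 := by
  have hM : (S + U).IsHermitian := hS.1.add hU.1
  set L : ℝ := lamMax U + lamMax S with hL
  set m : ℝ := lamMin S with hm
  set b := hM.eigenvectorBasis with hb
  set μ : Fin n → ℝ := hM.eigenvalues with hmu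
  -- eigenvalue bounds
  have hsplit : ∀ v : EuclideanSpace ℝ (Fin n),
      ⟪v, Matrix.toEuclideanLin (S + U) v⟫_ℝ
        = ⟪v, Matrix.toEuclideanLin S v⟫_ℝ + ⟪v, Matrix.toEuclideanLin U v⟫_ℝ := by
    intro v
    rw [map_add]
    simp [inner_add_right]
  have hmL : m ≤ L := by
    rcases Nat.eq_zero_or_pos n with h0 | h0
    · subst h0
      have : m = 0 := by
        rw [hm, lamMin, dif_pos hS.1]
        exact Real.iInf_of_isEmpty _
      rw [this]; exact hpos.le
    · obtain ⟨i⟩ := Fin.pos_iff_nonempty.mp h0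
      have h1 := rayleigh_ge S hS.1 (hS.1.eigenvectorBasis i)
      have h2 := rayleigh_le S hS.1 (hS.1.eigenvectorBasis i)
      have hn : ‖hS.1.eigenvectorBasis i‖ = 1 := hS.1.eigenvectorBasis.orthonormal.1 i
      have h3 : lamMax S ≤ L := by
        rw [hL]
        have := lamMin_nonneg U hU
        have h4 : lamMin U ≤ lamMax U := by
          have g1 := rayleigh_ge U hU.1 (hU.1.eigenvectorBasis i)
          have g2 := rayleigh_le U hU.1 (hU.1.eigenvectorBasis i)
          have gn : ‖hU.1.eigenvectorBasis i‖ = 1 := hU.1.eigenvectorBasis.orthonormal.1 i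
          rw [gn] at g1 g2; simpa using g1.trans g2
        linarith
      rw [hn] at h1 h2
      simp only [one_pow, mul_one] at h1 h2
      exact le_trans (h1.trans h2) h3
  have hm0 : 0 ≤ m := lamMin_nonneg S hS
  have hmub : ∀ i : Fin n, m ≤ μ i ∧ μ i ≤ L := by
    intro i
    have hn : ‖b i‖ = 1 := b.orthonormal.1 i
    have hμi : ⟪b i, Matrix.toEuclideanLin (S + U) (b i)⟫_ℝ = μ i := by
      rw [eigLin _ hM i, real_inner_smul_right, real_inner_self_eq_norm_sq, hn]
      ring
    have hSu := rayleigh_le S hS.1 (b i)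
    have hSl := rayleigh_ge S hS.1 (b i)
    have hUu := rayleigh_le U hU.1 (b i)
    have hUl := rayleigh_ge U hU.1 (b i)
    have hU0 : (0:ℝ) ≤ ⟪b i, Matrix.toEuclideanLin U (b i)⟫_ℝ := by
      have := lamMin_nonneg U hU
      nlinarith [sq_nonneg ‖b i‖]
    rw [hn] at hSu hSl hUu
    simp only [one_pow, mul_one] at hSu hSl hUu
    have := hsplit (b i)
    constructor
    · rw [← hμi, this]; linarith
    · rw [← hμi, this, hL]; linarith
  -- coordinates
  set ζ : ℝ := m / L ^ 2 with hζ
  have hrepr : ∀ i : Fin n,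
      b.repr (x - ζ • (Matrix.toEuclideanLin (S + U) x)) i = (1 - ζ * μ i) * b.repr x i := by
    intro i
    rw [map_sub, _root_.map_smul]
    have := reprLin (S + U) hM x i
    simp only [PiLp.sub_apply, PiLp.smul_apply, smul_eq_mul]
    rw [this]; ring
  have hLHS : ‖x - ζ • (Matrix.toEuclideanLin (S + U) x)‖ ^ 2
      = ∑ i, ((1 - ζ * μ i) * b.repr x i) ^ 2 := by
    rw [normsq_repr b]
    exact Finset.sum_congr rfl fun i _ => by rw [hrepr i]
  have hRHS : ‖x‖ ^ 2 = ∑ i, (b.repr x i) ^ 2 := normsq_repr b x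
  rw [hLHS, hRHS, Finset.mul_sum]
  refine Finset.sum_le_sum fun i _ => ?_
  obtain ⟨h1, h2⟩ := hmub i
  have hL0 : 0 < L := hpos
  have key : (1 - ζ * μ i) ^ 2 ≤ 1 - m ^ 2 / L ^ 2 := by
    rw [hζ]
    have hL2 : (0:ℝ) < L ^ 2 := by positivity
    have hmμ : 0 ≤ μ i := hm0.trans h1
    have h5 : m * μ i ≤ L ^ 2 := by nlinarith
    rw [div_mul_eq_mul_div]
    have ht0 : 0 ≤ m * μ i / L ^ 2 := by positivity
    have ht1 : m * μ i / L ^ 2 ≤ 1 := by rw [div_le_one hL2]; exact h5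
    have hst : m ^ 2 / L ^ 2 ≤ m * μ i / L ^ 2 :=
      (div_le_div_iff_of_pos_right hL2).mpr (by nlinarith)
    nlinarith [mul_nonneg ht0 (sub_nonneg.2 ht1)]
  calc ((1 - ζ * μ i) * b.repr x i) ^ 2 = (1 - ζ * μ i) ^ 2 * (b.repr x i) ^ 2 := by ring
    _ ≤ (1 - m ^ 2 / L ^ 2) * (b.repr x i) ^ 2 :=
        mul_le_mul_of_nonneg_right key (sq_nonneg _)
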